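/- Let C be a Krull-Schmidt category with local descending chain condition on ideals, I an idempotent ideal of C, L a representative set of the identity morphisms contained in I, and R = I ∩ rad_C*. Then I is generated as an ideal of C by L ∪ R. -/

import Mathlib

open CategoryTheory CategoryTheory.Limits

universe w v u

structure CatIdeal (C : Type u) [Category.{v} C] [Preadditive C] where
  mem : ∀ {X Y : C}, (X ⟶ Y) → Prop
  zero_mem : ∀ {X Y : C}, mem (0 : X ⟶ Y)
  add_mem : ∀ {X Y : C} {f g : X ⟶ Y}, mem f → mem g → mem (f + g)
  comp_mem_left : ∀ {X Y Z : C} {f : X ⟶ Y} (g : Y ⟶ Z), mem f → mem (f ≫ g)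
  comp_mem_right : ∀ {X Y Z : C} (f : X ⟶ Y) {g : Y ⟶ Z}, mem g → mem (f ≫ g)

namespace CatIdeal

variable {C : Type u} [Category.{v} C] [Preadditive C]

instance : LE (CatIdeal C) :=
  ⟨fun I J => ∀ {X Y : C} {f : X ⟶ Y}, I.mem f → J.mem f⟩

/-- The ideal of all morphisms. -/
def top (C : Type u) [Category.{v} C] [Preadditive C] : CatIdeal C where
  mem _ := True
  zero_mem := trivial
  add_mem := by intros; trivial
  comp_mem_left := by intros; trivial
  comp_mem_right := by intros; trivial

/-- The ideal generated by a class of morphisms. -/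
def span (S : ∀ {X Y : C}, (X ⟶ Y) → Prop) : CatIdeal C where
  mem f := ∀ J : CatIdeal C, (∀ {A B : C} {g : A ⟶ B}, S g → J.mem g) → J.mem f
  zero_mem := fun J _ => J.zero_mem
  add_mem := by intro X Y f g hf hg J hS; exact J.add_mem (hf J hS) (hg J hS)
  comp_mem_left := by intro X Y Z f g hf J hS; exact J.comp_mem_left g (hf J hS)
  comp_mem_right := by intro X Y Z f g hg J hS; exact J.comp_mem_right f (hg J hS)

/-- The product of two ideals: the ideal generated by all composites `g ≫ h`
with `g ∈ I` and `h ∈ J`. -/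
def mul (I J : CatIdeal C) : CatIdeal C :=
  span (fun {X Z} f => ∃ (Y : C) (g : X ⟶ Y) (h : Y ⟶ Z), I.mem g ∧ J.mem h ∧ f = g ≫ h)

/-- An ideal is idempotent if it equals its square. -/
def IsIdempotent (I : CatIdeal C) : Prop := I = I.mul I

/-- The intersection of a family of ideals. -/
def iInter {ι : Sort*} (F : ι → CatIdeal C) : CatIdeal C where
  mem f := ∀ i, (F i).mem f
  zero_mem := fun i => (F i).zero_mem
  add_mem := by intro X Y f g hf hg i; exact (F i).add_mem (hf i) (hg i)
  comp_mem_left := by intro X Y Z f g hf i; exact (F i).comp_mem_left g (hf i)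
  comp_mem_right := by intro X Y Z f g hg i; exact (F i).comp_mem_right f (hg i)

/-- Finite powers of an ideal: `npow I n` is the ideal generated by `n`-fold
composites of morphisms from `I` (with `npow I 0` the ideal of all morphisms). -/
def npow (I : CatIdeal C) : ℕ → CatIdeal C
  | 0 => top C
  | n + 1 => (npow I n).mul I

/-- The largest limit-or-zero ordinal `≤ α`, namely `ω * (α / ω)`. -/
noncomputable def limitPart (α : Ordinal.{w}) : Ordinal.{w} :=
  Ordinal.omega0 * (α / Ordinal.omega0)

theorem limitPart_lt {α : Ordinal.{w}} (h0 : α ≠ 0) (hl : ¬ Order.IsSuccLimit α) :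
    limitPart α < α := by
  have hle : limitPart α ≤ α := Ordinal.mul_div_le α Ordinal.omega0
  rcases lt_or_eq_of_le hle with h | h
  · exact h
  · exfalso
    rcases eq_or_ne (α / Ordinal.omega0) 0 with hq | hq
    · exact h0 (by rw [← h]; simp [limitPart, hq])
    · exact hl (by rw [← h]; exact Ordinal.isSuccLimit_mul_left Ordinal.isSuccLimit_omega0 (pos_iff_ne_zero.2 hq))

end CatIdeal

open Ordinal Classical in
/-- Transfinite powers of an ideal `I`: `tpow I 0` is the ideal of all morphisms,
`tpow I n` (for finite `n ≥ 1`) is the ideal generated by `n`-fold composites of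
morphisms from `I`, `tpow I α = ⋂_{β < α} tpow I β` at limit ordinals `α`, and
`tpow I (β + n) = (tpow I β) ^ (n + 1)` for `β` limit and `1 ≤ n < ω`. -/
noncomputable def CatIdeal.tpow {C : Type u} [Category.{v} C] [Preadditive C]
    (I : CatIdeal C) : Ordinal.{w} → CatIdeal C
  | α =>
    if h0 : α = 0 then CatIdeal.top C
    else if hl : Order.IsSuccLimit α then
      CatIdeal.iInter (fun β : {β : Ordinal.{w} // β < α} =>
        have := β.2
        CatIdeal.tpow I β.1)
    else
      (have : Ordinal.pred α < α :=
        by obtain ⟨a, rfl⟩ := (Ordinal.zero_or_succ_or_isSuccLimit α).resolve_left h0 |>.resolve_right hl; exact (Ordinal.pred_succ a).symm ▸ Order.lt_succ a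
       CatIdeal.tpow I (Ordinal.pred α)).mul
        (if Ordinal.omega0 ≤ α then
          have := CatIdeal.limitPart_lt h0 hl
          CatIdeal.tpow I (CatIdeal.limitPart α)
         else I)
  termination_by α => α

namespace CatIdeal

/-- The intersection `I* = ⋂_α I^α` of all transfinite powers of `I`. -/
noncomputable def tstar {C : Type u} [Category.{v} C] [Preadditive C] (I : CatIdeal C) : CatIdeal C :=
  iInter (fun α : Ordinal.{v} => tpow I α)

end CatIdeal

section KS

open CategoryTheory CategoryTheory.Limits

variable (C : Type u) [Category.{v} C] [Preadditive C]

/-- `X` is a biproduct (finite direct sum) of the finite family `Y`,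
witnessed by projections and inclusions. -/
def IsBiproductOf (X : C) {n : ℕ} (Y : Fin n → C) : Prop :=
  ∃ (p : ∀ i, X ⟶ Y i) (s : ∀ i, Y i ⟶ X),
    (∀ i, s i ≫ p i = 𝟙 (Y i)) ∧ (∀ i j, i ≠ j → s i ≫ p j = 0) ∧
    (∑ i, p i ≫ s i) = 𝟙 X

/-- An object is indecomposable if it is nonzero and has no idempotent endomorphisms
other than `0` and the identity (i.e. it admits no nontrivial direct sum decomposition). -/
def IsIndecomposableObj (X : C) : Prop :=
  ¬ IsZero X ∧ ∀ e : X ⟶ X, e ≫ e = e → e = 0 ∨ e = 𝟙 X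

/-- The radical of a Krull-Schmidt category: the ideal generated by all non-invertible
morphisms between indecomposable objects. -/
def catRadical : CatIdeal C :=
  CatIdeal.span (fun {X Y} f => IsIndecomposableObj C X ∧ IsIndecomposableObj C Y ∧ ¬ IsIso f)

/-- The transfinite radical `rad_C* = ⋂_α rad_C^α`. -/
noncomputable def catTransRadical : CatIdeal C := CatIdeal.tstar (catRadical C)

/-- A Krull-Schmidt category: every object decomposes as a finite direct sum of objects
with local endomorphism rings. -/
def IsKrullSchmidt : Prop :=
  ∀ X : C, ∃ (n : ℕ) (Y : Fin n → C),
    (∀ i, IsLocalRing (End (Y i))) ∧ IsBiproductOf C X Y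

/-- Local descending chain condition on ideals: every descending chain of ideals,
evaluated at any fixed pair of objects, stabilizes. -/
def HasLocalDCC : Prop :=
  ∀ (I : ℕ → CatIdeal C), (∀ n, I (n + 1) ≤ I n) →
    ∀ X Y : C, ∃ n, ∀ m, n ≤ m → ∀ f : X ⟶ Y, (I m).mem f ↔ (I n).mem f

/-- The ideal generated by the identity morphisms of the objects in `S`. -/
def identityIdeal (S : Set C) : CatIdeal C :=
  CatIdeal.span (fun {X Y} f => ∃ h : X = Y, X ∈ S ∧ f = CategoryTheory.eqToHom h)

/-- An ideal is zero if it consists exactly of the zero morphisms. -/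
def CatIdeal.IsZeroIdeal {C : Type u} [Category.{v} C] [Preadditive C] (I : CatIdeal C) : Prop :=
  ∀ {X Y : C} {f : X ⟶ Y}, I.mem f → f = 0

end KS


section AuxProof
open CategoryTheory CatIdeal

variable {C : Type u} [Category.{v} C] [Preadditive C]

namespace CatIdeal

theorem le_refl'' (I : CatIdeal C) : I ≤ I := fun h => h

theorem le_trans'' {I J K : CatIdeal C} (h1 : I ≤ J) (h2 : J ≤ K) : I ≤ K :=
  fun hf => h2 (h1 hf)

theorem span_le' {S : ∀ {X Y : C}, (X ⟶ Y) → Prop} {J : CatIdeal C}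
    (h : ∀ {A B : C} {g : A ⟶ B}, S g → J.mem g) : span S ≤ J :=
  fun hf => hf J h

theorem mem_span' {S : ∀ {X Y : C}, (X ⟶ Y) → Prop} {A B : C} {g : A ⟶ B}
    (h : S g) : (span S).mem g := fun J hJ => hJ h

theorem mul_le_left' (I J : CatIdeal C) : I.mul J ≤ I := by
  apply span_le'
  rintro A B g ⟨Z, a, b, ha, hb, rfl⟩
  exact I.comp_mem_left b ha

theorem sum_mem' (J : CatIdeal C) {ι : Type*} (t : Finset ι) {X Y : C}
    (φ : ι → (X ⟶ Y)) (h : ∀ i ∈ t, J.mem (φ i)) : J.mem (∑ i ∈ t, φ i) :=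
  Finset.sum_induction φ _ (fun _ _ => J.add_mem) J.zero_mem h

theorem ext' {I J : CatIdeal C}
    (h : ∀ {X Y : C} (f : X ⟶ Y), I.mem f ↔ J.mem f) : I = J := by
  cases I with
  | mk m z a cl cr =>
    cases J with
    | mk m' z' a' cl' cr' =>
      have : @m = @m' := by
        funext X Y f
        exact propext (h f)
      subst this
      rfl

theorem tpow_zero' (I : CatIdeal C) : tpow I (0 : Ordinal.{w}) = top C := by
  rw [tpow]
  simp

theorem tpow_limit' (I : CatIdeal C) {α : Ordinal.{w}} (hl : Order.IsSuccLimit α) :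
    tpow I α = iInter (fun β : {β : Ordinal.{w} // β < α} => tpow I β.1) := by
  rw [tpow]
  rw [dif_neg (Ordinal.isSuccLimit_iff.1 hl).1, dif_pos hl]

theorem tpow_succ' (I : CatIdeal C) {α : Ordinal.{w}} (h0 : α ≠ 0) (hl : ¬ Order.IsSuccLimit α) :
    tpow I α = (tpow I (Ordinal.pred α)).mul
      (if Ordinal.omega0 ≤ α then tpow I (limitPart α) else I) := by
  rw [tpow]
  rw [dif_neg h0, dif_neg hl]

end CatIdeal
end AuxProof
section AuxProof2
open CategoryTheory CatIdeal

variable {C : Type u} [Category.{v} C] [Preadditive C]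

namespace CatIdeal

theorem tpow_anti (I : CatIdeal C) :
    ∀ α β : Ordinal.{w}, β ≤ α → tpow I α ≤ tpow I β := by
  intro α
  induction α using Ordinal.induction with
  | h α IH =>
    intro β hβ
    rcases eq_or_lt_of_le hβ with rfl | hlt
    · exact fun h => h
    rcases eq_or_ne α 0 with rfl | h0
    · exact absurd hlt (not_lt_of_ge (zero_le (a := β)))
    by_cases hl : Order.IsSuccLimit α
    · rw [tpow_limit' I hl]
      exact fun hf => hf ⟨β, hlt⟩
    · rw [tpow_succ' I h0 hl]
      have hsucc : ∃ γ, α = Order.succ γ :=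
        by obtain ⟨a, ha⟩ := (Ordinal.zero_or_succ_or_isSuccLimit α).resolve_left h0 |>.resolve_right hl; exact ⟨a, ha.symm⟩
      have hpred : Ordinal.pred α < α := by obtain ⟨a, rfl⟩ := hsucc; exact (Ordinal.pred_succ a).symm ▸ Order.lt_succ a
      have hβp : β ≤ Ordinal.pred α := by
        obtain ⟨γ, rfl⟩ := hsucc
        rw [Ordinal.pred_succ]
        exact Order.lt_succ_iff.1 hlt
      exact le_trans'' (mul_le_left' _ _) (IH _ hpred β hβp)

/-- Sum of `L`-part and `(I ∩ T)`-part: the ideal of morphisms `u + v` with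
`u ∈ L`, `v ∈ I ∩ T`. -/
def Kid (I L T : CatIdeal C) : CatIdeal C where
  mem f := ∃ u v, L.mem u ∧ I.mem v ∧ T.mem v ∧ f = u + v
  zero_mem := ⟨0, 0, L.zero_mem, I.zero_mem, T.zero_mem, by simp⟩
  add_mem := by
    rintro X Y f g ⟨u, v, hu, hv, hv', rfl⟩ ⟨u', v', hu', hw, hw', rfl⟩
    exact ⟨u + u', v + v', L.add_mem hu hu', I.add_mem hv hw, T.add_mem hv' hw', by abel⟩
  comp_mem_left := by
    rintro X Y Z f g ⟨u, v, hu, hv, hv', rfl⟩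
    exact ⟨u ≫ g, v ≫ g, L.comp_mem_left g hu, I.comp_mem_left g hv,
      T.comp_mem_left g hv', by simp [Preadditive.add_comp]⟩
  comp_mem_right := by
    rintro X Y Z f g ⟨u, v, hu, hv, hv', rfl⟩
    exact ⟨f ≫ u, f ≫ v, L.comp_mem_right f hu, I.comp_mem_right f hv,
      T.comp_mem_right f hv', by simp [Preadditive.comp_add]⟩

end CatIdeal

/-- Local stabilization of an antitone ordinal-indexed chain of ideals, on any
downward-reachable predicate `P`. -/
theorem stab_lemma (hdcc : HasLocalDCC C) (F : Ordinal.{v} → CatIdeal C)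
    (hF : ∀ β γ : Ordinal.{v}, β ≤ γ → F γ ≤ F β)
    (P : Ordinal.{v} → Prop) (h0 : P 0) (X Y : C) :
    ∃ β₀, P β₀ ∧ ∀ β, P β → β₀ ≤ β → ∀ w : X ⟶ Y, (F β).mem w ↔ (F β₀).mem w := by
  by_contra hcon
  push_neg at hcon
  have H : ∀ β₀ : {o : Ordinal.{v} // P o}, ∃ β : {o : Ordinal.{v} // P o},
      β₀.1 ≤ β.1 ∧ ∃ w : X ⟶ Y, (F β₀.1).mem w ∧ ¬ (F β.1).mem w := by
    rintro ⟨β₀, hP⟩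
    obtain ⟨β, hPβ, hle, w, hw⟩ := hcon β₀ hP
    rcases hw with ⟨h1, h2⟩ | ⟨h1, h2⟩
    · exact absurd (hF _ _ hle h1) h2
    · exact ⟨⟨β, hPβ⟩, hle, w, h2, h1⟩
  let seq : ℕ → {o : Ordinal.{v} // P o} := fun n =>
    Nat.rec ⟨0, h0⟩ (fun _ prev => (H prev).choose) n
  have hseq : ∀ n, (seq n).1 ≤ (seq (n+1)).1 := fun n => (H (seq n)).choose_spec.1
  have hwit : ∀ n, ∃ w : X ⟶ Y, (F (seq n).1).mem w ∧ ¬ (F (seq (n+1)).1).mem w :=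
    fun n => (H (seq n)).choose_spec.2
  obtain ⟨n, hn⟩ := hdcc (fun n => F (seq n).1) (fun n => hF _ _ (hseq n)) X Y
  obtain ⟨w, hw1, hw2⟩ := hwit n
  exact hw2 ((hn (n+1) (Nat.le_succ n) w).2 hw1)

end AuxProof2
section AuxProof3
open CategoryTheory CatIdeal

variable {C : Type u} [Category.{v} C] [Preadditive C]

theorem indec_of_localEnd {W : C} (hW : IsLocalRing (End W)) :
    IsIndecomposableObj C W := by
  haveI := hW
  constructor
  · intro hz
    have h1 : (𝟙 W : W ⟶ W) = 0 := hz.eq_of_src _ _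
    exact one_ne_zero (show (1 : End W) = 0 from h1)
  · intro e he
    let e' : End W := e
    have hid : e' * e' = e' := he
    rcases IsLocalRing.isUnit_or_isUnit_of_add_one
      (show e' + (1 - e') = 1 by abel) with hu | hu
    · right
      have : e' * e' = e' * 1 := by rw [mul_one]; exact hid
      exact hu.mul_left_cancel this
    · left
      have h2 : ((1 : End W) - e') * (1 - e') = (1 - e') * 1 := by
        rw [mul_one, sub_mul, one_mul, mul_sub, mul_one, hid]
        abel
      have h3 : (1 : End W) - e' = 1 := hu.mul_left_cancel h2
      exact sub_eq_self.mp h3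

/-- In the setting of a Krull-Schmidt category, a morphism in `I` out of an
indecomposable object whose identity is not in `I` lies in the radical. -/
theorem mem_rad_of_not_id (hKS : IsKrullSchmidt C) (I : CatIdeal C) {Z Y : C}
    (hZ : IsIndecomposableObj C Z) (h : Z ⟶ Y) (hmem : I.mem h)
    (hid : ¬ I.mem (𝟙 Z)) : (catRadical C).mem h := by
  obtain ⟨m, V, hloc, p, s, hsp, hortho, hsum⟩ := hKS Y
  have hdec : h = ∑ j, (h ≫ p j) ≫ s j := by
    conv_lhs => rw [show h = h ≫ 𝟙 Y by simp, ← hsum]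
    rw [Preadditive.comp_sum]
    simp [Category.assoc]
  rw [hdec]
  apply sum_mem'
  intro j _
  have hrad : (catRadical C).mem (h ≫ p j) := by
    apply mem_span'
    refine ⟨hZ, indec_of_localEnd (hloc j), ?_⟩
    intro hiso
    apply hid
    have : (𝟙 Z : Z ⟶ Z) = (h ≫ p j) ≫ inv (h ≫ p j) := by simp
    rw [this, Category.assoc]
    exact I.comp_mem_left _ hmem
  exact (catRadical C).comp_mem_left (s j) hrad

theorem comp_decomp_sum {Z : C} {n : ℕ} {W : Fin n → C}
    (p : ∀ i, Z ⟶ W i) (s : ∀ i, W i ⟶ Z) (hsum : (∑ i, p i ≫ s i) = 𝟙 Z)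
    {X Y : C} (g : X ⟶ Z) (h : Z ⟶ Y) :
    g ≫ h = ∑ i, (g ≫ p i) ≫ (s i ≫ h) := by
  have : g ≫ h = g ≫ (∑ i, p i ≫ s i) ≫ h := by rw [hsum]; simp
  rw [this, Preadditive.sum_comp, Preadditive.comp_sum]
  simp [Category.assoc]

end AuxProof3
section KeyLemma
open CategoryTheory CatIdeal

variable {C : Type u} [Category.{v} C] [Preadditive C]

/-- The intersection of two ideals. -/
def CatIdeal.inf' (I J : CatIdeal C) : CatIdeal C where
  mem f := I.mem f ∧ J.mem f
  zero_mem := ⟨I.zero_mem, J.zero_mem⟩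
  add_mem := by
    intro X Y f g h1 h2
    exact ⟨I.add_mem h1.1 h2.1, J.add_mem h1.2 h2.2⟩
  comp_mem_left := by
    intro X Y Z f g h
    exact ⟨I.comp_mem_left g h.1, J.comp_mem_left g h.2⟩
  comp_mem_right := by
    intro X Y Z f g h
    exact ⟨I.comp_mem_right f h.1, J.comp_mem_right f h.2⟩

theorem key_lemma (hKS : IsKrullSchmidt C) (hdcc : HasLocalDCC C)
    (I : CatIdeal C) (hI : I.IsIdempotent) (S : Set C)
    (hS2 : ∀ X : C, I.mem (𝟙 X) → ∃ Y ∈ S, Nonempty (X ≅ Y)) :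
    ∀ α : Ordinal.{v}, ∀ {X Y : C} (f : X ⟶ Y), I.mem f →
      (Kid I (identityIdeal C S) (tpow (catRadical C) α)).mem f := by
  intro α
  induction α using Ordinal.induction with
  | h α IH =>
    intro X Y f hf
    rcases eq_or_ne α 0 with rfl | h0
    · exact ⟨0, f, (identityIdeal C S).zero_mem, hf,
        by rw [tpow_zero']; trivial, by simp⟩
    by_cases hl : Order.IsSuccLimit α
    · -- limit case: use local stabilization below `α`
      obtain ⟨β₀, hβ₀, hstab⟩ := stab_lemma hdcc
        (fun β => CatIdeal.inf' I (tpow (catRadical C) β))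
        (fun β γ h => fun {X Y f} hf' => ⟨hf'.1, tpow_anti _ _ _ h hf'.2⟩)
        (fun β => β < α) (pos_iff_ne_zero.2 (Ordinal.isSuccLimit_iff.1 hl).1) X Y
      obtain ⟨u, v, hu, hvI, hvT, heq⟩ := IH β₀ hβ₀ f hf
      refine ⟨u, v, hu, hvI, ?_, heq⟩
      rw [tpow_limit' _ hl]
      rintro ⟨β, hβ⟩
      rcases le_total β β₀ with h | h
      · exact tpow_anti _ _ _ h hvT
      · exact ((hstab β hβ h v).mpr ⟨hvI, hvT⟩).2
    · -- successor-type case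
      have hsucc : ∃ γ, α = Order.succ γ :=
        by obtain ⟨a, ha⟩ := (Ordinal.zero_or_succ_or_isSuccLimit α).resolve_left h0 |>.resolve_right hl; exact ⟨a, ha.symm⟩
      have hpred : Ordinal.pred α < α := by obtain ⟨a, rfl⟩ := hsucc; exact (Ordinal.pred_succ a).symm ▸ Order.lt_succ a
      have hf2 : (I.mul I).mem f := hI ▸ hf
      apply hf2
      rintro A B g ⟨Z, a, b, ha, hb, rfl⟩
      obtain ⟨n, W, hloc, p, s, hsp, hortho, hsum⟩ := hKS Z
      rw [comp_decomp_sum p s hsum a b]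
      apply sum_mem'
      intro k _
      have hg1 : I.mem (a ≫ p k) := I.comp_mem_left _ ha
      have hg2 : I.mem (s k ≫ b) := I.comp_mem_right _ hb
      by_cases hω : Ordinal.omega0 ≤ α
      · have hlp : limitPart α < α := limitPart_lt h0 hl
        obtain ⟨u, v, hu, hvI, hvT, hgeq⟩ := IH _ hpred (a ≫ p k) hg1
        obtain ⟨u', v', hu', hv'I, hv'T, hheq⟩ := IH _ hlp (s k ≫ b) hg2
        refine ⟨u ≫ (s k ≫ b) + v ≫ u', v ≫ v', ?_, I.comp_mem_left _ hvI, ?_, ?_⟩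
        · exact (identityIdeal C S).add_mem
            ((identityIdeal C S).comp_mem_left _ hu)
            ((identityIdeal C S).comp_mem_right _ hu')
        · rw [tpow_succ' _ h0 hl, if_pos hω]
          exact mem_span' ⟨_, v, v', hvT, hv'T, rfl⟩
        · rw [hgeq, hheq]
          simp only [Preadditive.add_comp, Preadditive.comp_add]
          abel
      · by_cases hid : I.mem (𝟙 (W k))
        · obtain ⟨W', hW', ⟨φ⟩⟩ := hS2 _ hid
          have h1 : (identityIdeal C S).mem (𝟙 W') :=
            mem_span' ⟨rfl, hW', (CategoryTheory.eqToHom_refl W' rfl).symm⟩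
          have h3 := (identityIdeal C S).comp_mem_right ((a ≫ p k) ≫ φ.hom)
            ((identityIdeal C S).comp_mem_left (φ.inv ≫ (s k ≫ b)) h1)
          have heq : (a ≫ p k) ≫ (s k ≫ b)
              = ((a ≫ p k) ≫ φ.hom) ≫ (𝟙 W' ≫ (φ.inv ≫ (s k ≫ b))) := by simp
          refine ⟨(a ≫ p k) ≫ (s k ≫ b), 0, ?_, I.zero_mem,
            (tpow (catRadical C) α).zero_mem, by simp⟩
          rw [heq]
          exact h3
        · have hrad : (catRadical C).mem (s k ≫ b) :=
            mem_rad_of_not_id hKS I (indec_of_localEnd (hloc k)) (s k ≫ b) hg2 hid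
          obtain ⟨u, v, hu, hvI, hvT, hgeq⟩ := IH _ hpred (a ≫ p k) hg1
          refine ⟨u ≫ (s k ≫ b), v ≫ (s k ≫ b),
            (identityIdeal C S).comp_mem_left _ hu, I.comp_mem_left _ hvI, ?_,
            by rw [hgeq]; simp [Preadditive.add_comp]⟩
          rw [tpow_succ' _ h0 hl, if_neg hω]
          exact mem_span' ⟨_, v, s k ≫ b, hvT, hrad, rfl⟩

end KeyLemma
open CategoryTheory in
/-- An idempotent ideal is generated by a representative set `S` of its
identity morphisms together with its intersection with the transfinite radical. -/
theorem stmt8 {C : Type u} [CategoryTheory.Category.{v} C] [CategoryTheory.Preadditive C] [CategoryTheory.Limits.HasFiniteBiproducts C] [CategoryTheory.EssentiallySmall.{v} C] (hKS : IsKrullSchmidt C) (hdcc : HasLocalDCC C)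
    (I : CatIdeal C) (hI : I.IsIdempotent) (S : Set C)
    (hS1 : ∀ X ∈ S, I.mem (𝟙 X))
    (hS2 : ∀ X : C, I.mem (𝟙 X) → ∃ Y ∈ S, Nonempty (X ≅ Y)) :
    I = CatIdeal.span (fun {A B} f =>
      (∃ h : A = B, A ∈ S ∧ f = CategoryTheory.eqToHom h) ∨
      (I.mem f ∧ (catTransRadical C).mem f)) := by
  apply CatIdeal.ext'
  intro X Y f
  constructor
  · intro hf
    obtain ⟨β₀, -, hstab⟩ := stab_lemma hdcc
      (fun β => CatIdeal.inf' I (CatIdeal.tpow (catRadical C) β))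
      (fun β γ h => fun {X Y f} hf' => ⟨hf'.1, CatIdeal.tpow_anti _ _ _ h hf'.2⟩)
      (fun _ => True) trivial X Y
    obtain ⟨u, v, hu, hvI, hvT, heq⟩ := key_lemma hKS hdcc I hI S hS2 β₀ f hf
    have hvR : (catTransRadical C).mem v := by
      intro β
      rcases le_total β β₀ with h | h
      · exact CatIdeal.tpow_anti _ _ _ h hvT
      · exact ((hstab β trivial h v).mpr ⟨hvI, hvT⟩).2
    rw [heq]
    apply (CatIdeal.span _).add_mem
    · exact hu _ (fun {A B g} hg => CatIdeal.mem_span' (Or.inl hg))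
    · exact CatIdeal.mem_span' (Or.inr ⟨hvI, hvR⟩)
  · intro hf
    apply hf I
    rintro A B g (⟨rfl, hA, rfl⟩ | ⟨hg, -⟩)
    · simpa using hS1 A hA
    · exact hg
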